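/- Let α be a type and let c₁, c₃, c₄, c₅ be positive natural numbers defining the cost homomorphism. For every regular language L over α, at least one of the following holds: (i) L = ∅, or L = {ε}, or L = {[a]} for some a ∈ α (in each case cost(L) = c₁); (ii) there is a regular language M with L = M∗ and cost(M) + c₃ ≤ cost(L); (iii) there are regular languages M₁, M₂ with L = M₁ · M₂ and cost(M₁) + cost(M₂) + c₄ ≤ cost(L); (iv) there are regular languages M₁, M₂ with L = M₁ ∪ M₂ and cost(M₁) + cost(M₂) + c₅ ≤ cost(L). (This is the completeness of bottom-up construction of minimal-cost regular languages.) -/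
import Mathlib


open Computability

variable {α : Type*}

/-- The cost homomorphism on regular expressions: `cost 0 = cost ε = cost (char a) = c₁`,
`cost (r * s) = cost r + cost s + c₄`, `cost (r + s) = cost r + cost s + c₅`,
`cost (r∗) = cost r + c₃`. -/
def reCost (c₁ c₃ c₄ c₅ : ℕ) : RegularExpression α → ℕ
  | RegularExpression.zero => c₁
  | RegularExpression.epsilon => c₁
  | RegularExpression.char _ => c₁
  | RegularExpression.plus r s => reCost c₁ c₃ c₄ c₅ r + reCost c₁ c₃ c₄ c₅ s + c₅
  | RegularExpression.comp r s => reCost c₁ c₃ c₄ c₅ r + reCost c₁ c₃ c₄ c₅ s + c₄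
  | RegularExpression.star r => reCost c₁ c₃ c₄ c₅ r + c₃

/-- The cost of a (regular) language: the infimum of the costs of regular expressions
denoting it. -/
noncomputable def langCost (c₁ c₃ c₄ c₅ : ℕ) (L : Language α) : ℕ :=
  sInf {c | ∃ r : RegularExpression α, r.matches' = L ∧ reCost c₁ c₃ c₄ c₅ r = c}



lemma langCost_le (c₁ c₃ c₄ c₅ : ℕ) (L : Language α) (r : RegularExpression α)
    (h : r.matches' = L) : langCost c₁ c₃ c₄ c₅ L ≤ reCost c₁ c₃ c₄ c₅ r :=
  Nat.sInf_le ⟨r, h, rfl⟩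

/-- Completeness of bottom-up construction of minimal-cost regular languages: every
regular language `L` is either basic (`∅`, `{ε}`, or `{[a]}`, with cost `c₁`), or is a
star, concatenation, or union of regular languages whose costs (plus the constructor
cost) bound `cost L` from below. -/
theorem bottomUp_complete (c₁ c₃ c₄ c₅ : ℕ)
    (hc₁ : 0 < c₁) (hc₃ : 0 < c₃) (hc₄ : 0 < c₄) (hc₅ : 0 < c₅)
    (L : Language α) (hL : ∃ r : RegularExpression α, r.matches' = L) :
    (((show Set (List α) from L) = ∅ ∨ (show Set (List α) from L) = {([] : List α)} ∨
        ∃ a : α, (show Set (List α) from L) = {[a]}) ∧ langCost c₁ c₃ c₄ c₅ L = c₁) ∨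
    (∃ M : Language α, (∃ r : RegularExpression α, r.matches' = M) ∧ L = M∗ ∧
        langCost c₁ c₃ c₄ c₅ M + c₃ ≤ langCost c₁ c₃ c₄ c₅ L) ∨
    (∃ M₁ M₂ : Language α, (∃ r : RegularExpression α, r.matches' = M₁) ∧
        (∃ r : RegularExpression α, r.matches' = M₂) ∧ L = M₁ * M₂ ∧
        langCost c₁ c₃ c₄ c₅ M₁ + langCost c₁ c₃ c₄ c₅ M₂ + c₄ ≤ langCost c₁ c₃ c₄ c₅ L) ∨
    (∃ M₁ M₂ : Language α, (∃ r : RegularExpression α, r.matches' = M₁) ∧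
        (∃ r : RegularExpression α, r.matches' = M₂) ∧
        (show Set (List α) from L) = (M₁ ∪ M₂ : Set (List α)) ∧
        langCost c₁ c₃ c₄ c₅ M₁ + langCost c₁ c₃ c₄ c₅ M₂ + c₅ ≤ langCost c₁ c₃ c₄ c₅ L) := by
  
  obtain ⟨r0, hr0⟩ := hL
  have hne : langCost c₁ c₃ c₄ c₅ L ∈
      {c | ∃ r : RegularExpression α, r.matches' = L ∧ reCost c₁ c₃ c₄ c₅ r = c} :=
    Nat.sInf_mem ⟨_, r0, hr0, rfl⟩
  obtain ⟨r, hrL, hrc⟩ := hne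
  cases r with
  | zero =>
    left
    constructor
    · left; rw [← hrL]; rfl
    · rw [← hrc]; rfl
  | epsilon =>
    left
    constructor
    · right; left; rw [← hrL]; rfl
    · rw [← hrc]; rfl
  | char a =>
    left
    constructor
    · right; right; exact ⟨a, by rw [← hrL]; rfl⟩
    · rw [← hrc]; rfl
  | plus r s =>
    right; right; right
    refine ⟨r.matches', s.matches', ⟨r, rfl⟩, ⟨s, rfl⟩, by rw [← hrL]; rfl, ?_⟩
    calc langCost c₁ c₃ c₄ c₅ r.matches' + langCost c₁ c₃ c₄ c₅ s.matches' + c₅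
        ≤ reCost c₁ c₃ c₄ c₅ r + reCost c₁ c₃ c₄ c₅ s + c₅ := by
          gcongr <;> exact langCost_le _ _ _ _ _ _ rfl
      _ = langCost c₁ c₃ c₄ c₅ L := hrc
  | comp r s =>
    right; right; left
    refine ⟨r.matches', s.matches', ⟨r, rfl⟩, ⟨s, rfl⟩, by rw [← hrL]; rfl, ?_⟩
    calc langCost c₁ c₃ c₄ c₅ r.matches' + langCost c₁ c₃ c₄ c₅ s.matches' + c₄
        ≤ reCost c₁ c₃ c₄ c₅ r + reCost c₁ c₃ c₄ c₅ s + c₄ := by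
          gcongr <;> exact langCost_le _ _ _ _ _ _ rfl
      _ = langCost c₁ c₃ c₄ c₅ L := hrc
  | star r =>
    right; left
    refine ⟨r.matches', ⟨r, rfl⟩, by rw [← hrL]; rfl, ?_⟩
    calc langCost c₁ c₃ c₄ c₅ r.matches' + c₃
        ≤ reCost c₁ c₃ c₄ c₅ r + c₃ := by
          gcongr; exact langCost_le _ _ _ _ _ _ rfl
      _ = langCost c₁ c₃ c₄ c₅ L := hrc
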